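/- Let G be the graph consisting of an odd cycle C = v_1 ... v_k (k ≥ 5 odd) together with, for each vertex v_i of C, one triangle whose three vertices are all adjacent to v_i, the triangles being pairwise anticomplete and having no other neighbours in C. Then G is not a contact B0-VPG graph. -/

import Mathlib

/-- An axis-parallel nontrivial segment on the grid: `horiz` tells its direction,
`coord` is the fixed coordinate (the `y`-coordinate if horizontal, the `x`-coordinate
if vertical) and `[lo, hi]` (with `lo < hi`, i.e. the segment is nontrivial) is the
interval spanned by the varying coordinate. -/
structure GridSeg where
  horiz : Bool
  coord : ℤ
  lo : ℤ
  hi : ℤ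
  lt : lo < hi

namespace GridSeg

/-- The set of points (in the real plane) of a grid segment. -/
def pts (s : GridSeg) : Set (ℝ × ℝ) :=
  if s.horiz then {p | p.2 = (s.coord : ℝ) ∧ (s.lo : ℝ) ≤ p.1 ∧ p.1 ≤ (s.hi : ℝ)}
  else {p | p.1 = (s.coord : ℝ) ∧ (s.lo : ℝ) ≤ p.2 ∧ p.2 ≤ (s.hi : ℝ)}

/-- The interior of a grid segment. -/
def interior (s : GridSeg) : Set (ℝ × ℝ) :=
  if s.horiz then {p | p.2 = (s.coord : ℝ) ∧ (s.lo : ℝ) < p.1 ∧ p.1 < (s.hi : ℝ)}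
  else {p | p.1 = (s.coord : ℝ) ∧ (s.lo : ℝ) < p.2 ∧ p.2 < (s.hi : ℝ)}

/-- The two endpoints of a grid segment. -/
def ends (s : GridSeg) : Set (ℝ × ℝ) :=
  if s.horiz then {((s.lo : ℝ), (s.coord : ℝ)), ((s.hi : ℝ), (s.coord : ℝ))}
  else {((s.coord : ℝ), (s.lo : ℝ)), ((s.coord : ℝ), (s.hi : ℝ))}

/-- Two segments touch if they share a point which is an endpoint of at least
one of the two segments. -/
def Touch (s t : GridSeg) : Prop :=
  ∃ p : ℝ × ℝ, p ∈ s.pts ∧ p ∈ t.pts ∧ (p ∈ s.ends ∨ p ∈ t.ends)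

end GridSeg

/-- `f` is a contact B₀-VPG representation of `G`: the segments of distinct vertices are
interiorly disjoint, and two distinct vertices are adjacent iff their segments touch. -/
def IsB0Rep {V : Type*} (G : SimpleGraph V) (f : V → GridSeg) : Prop :=
  (∀ v w : V, v ≠ w → Disjoint (GridSeg.interior (f v)) (GridSeg.interior (f w))) ∧
  (∀ v w : V, v ≠ w → (G.Adj v w ↔ GridSeg.Touch (f v) (f w)))

/-- A graph is contact B₀-VPG if it admits a contact B₀-VPG representation. -/
def ContactB0VPG {V : Type*} (G : SimpleGraph V) : Prop :=
  ∃ f : V → GridSeg, IsB0Rep G f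

/-- Cyclic shift: the element `i + m (mod k)` of `Fin k`. -/
def cycShift {k : ℕ} (i : Fin k) (m : ℕ) : Fin k :=
  i + ⟨m % k, Nat.mod_lt m (Nat.lt_of_le_of_lt (Nat.zero_le i.1) i.isLt)⟩

/-- `c` lists the vertices of an induced cycle (a hole, when `k ≥ 4`) of `G`, in cyclic
order: `c` is injective and two of its vertices are adjacent iff they are consecutive. -/
def IsInducedCycle {V : Type*} (G : SimpleGraph V) {k : ℕ} (c : Fin k → V) : Prop :=
  Function.Injective c ∧
    ∀ i j : Fin k, G.Adj (c i) (c j) ↔ (i ≠ j ∧ (i = cycShift j 1 ∨ j = cycShift i 1))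

/-- The graph made of a `k`-cycle `v_1 … v_k` together with, for each `i`, `t i` pairwise
anticomplete triangles complete to `v_i` (and anticomplete to the rest of the graph).
Vertices: `Sum.inl i` is the cycle vertex `v_i`; `Sum.inr ⟨i, a, x⟩` is the `x`-th vertex
of the `a`-th triangle attached to `v_i`. -/
def cycleWithTriangles (k : ℕ) (t : Fin k → ℕ) :
    SimpleGraph (Fin k ⊕ Σ i : Fin k, Fin (t i) × Fin 3) where
  Adj a b :=
    match a, b with
    | Sum.inl i, Sum.inl j => i ≠ j ∧ (i = cycShift j 1 ∨ j = cycShift i 1)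
    | Sum.inl i, Sum.inr x => i = x.1
    | Sum.inr x, Sum.inl i => i = x.1
    | Sum.inr x, Sum.inr y => x.1 = y.1 ∧ x.2.1.1 = y.2.1.1 ∧ x.2.2 ≠ y.2.2
  symm := by
    constructor
    rintro (i | x) (j | y) h
    · exact ⟨h.1.symm, h.2.symm⟩
    · exact h
    · exact h
    · exact ⟨h.1.symm, h.2.1.symm, h.2.2.symm⟩
  loopless := by
    constructor
    rintro (i | x) h
    · exact h.1 rfl
    · exact h.2.2 rfl


namespace F3Aux
open GridSeg

lemma pts_horiz {s : GridSeg} (h : s.horiz = true) {p : ℝ × ℝ} :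
    p ∈ s.pts ↔ p.2 = (s.coord : ℝ) ∧ (s.lo : ℝ) ≤ p.1 ∧ p.1 ≤ (s.hi : ℝ) := by
  simp [GridSeg.pts, h]

lemma pts_vert {s : GridSeg} (h : s.horiz = false) {p : ℝ × ℝ} :
    p ∈ s.pts ↔ p.1 = (s.coord : ℝ) ∧ (s.lo : ℝ) ≤ p.2 ∧ p.2 ≤ (s.hi : ℝ) := by
  simp [GridSeg.pts, h]

lemma int_horiz {s : GridSeg} (h : s.horiz = true) {p : ℝ × ℝ} :
    p ∈ s.interior ↔ p.2 = (s.coord : ℝ) ∧ (s.lo : ℝ) < p.1 ∧ p.1 < (s.hi : ℝ) := by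
  simp [GridSeg.interior, h]

lemma int_vert {s : GridSeg} (h : s.horiz = false) {p : ℝ × ℝ} :
    p ∈ s.interior ↔ p.1 = (s.coord : ℝ) ∧ (s.lo : ℝ) < p.2 ∧ p.2 < (s.hi : ℝ) := by
  simp [GridSeg.interior, h]

lemma ends_horiz {s : GridSeg} (h : s.horiz = true) {p : ℝ × ℝ} :
    p ∈ s.ends ↔ p = (((s.lo : ℝ)), ((s.coord : ℝ))) ∨ p = (((s.hi : ℝ)), ((s.coord : ℝ))) := by
  simp [GridSeg.ends, h]

lemma ends_vert {s : GridSeg} (h : s.horiz = false) {p : ℝ × ℝ} :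
    p ∈ s.ends ↔ p = (((s.coord : ℝ)), ((s.lo : ℝ))) ∨ p = (((s.coord : ℝ)), ((s.hi : ℝ))) := by
  simp [GridSeg.ends, h]

lemma lo_lt_hi (s : GridSeg) : (s.lo : ℝ) < (s.hi : ℝ) := by exact_mod_cast s.lt

lemma ends_pts {s : GridSeg} {p : ℝ × ℝ} (h : p ∈ s.ends) : p ∈ s.pts := by
  cases hb : s.horiz
  · rw [ends_vert hb] at h
    rw [pts_vert hb]
    rcases h with rfl | rfl
    · exact ⟨rfl, le_refl _, (lo_lt_hi s).le⟩
    · exact ⟨rfl, (lo_lt_hi s).le, le_refl _⟩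
  · rw [ends_horiz hb] at h
    rw [pts_horiz hb]
    rcases h with rfl | rfl
    · exact ⟨rfl, le_refl _, (lo_lt_hi s).le⟩
    · exact ⟨rfl, (lo_lt_hi s).le, le_refl _⟩

lemma ends_two {s : GridSeg} {a b r : ℝ × ℝ} (ha : a ∈ s.ends) (hb : b ∈ s.ends)
    (hr : r ∈ s.ends) (hab : a ≠ b) : r = a ∨ r = b := by
  cases hh : s.horiz
  · rw [ends_vert hh] at ha hb hr
    rcases ha with rfl | rfl <;> rcases hb with rfl | rfl <;>
      first | exact absurd rfl hab | tauto
  · rw [ends_horiz hh] at ha hb hr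
    rcases ha with rfl | rfl <;> rcases hb with rfl | rfl <;>
      first | exact absurd rfl hab | tauto

def Occ (s : GridSeg) (p : ℝ × ℝ) : Bool × Bool → Prop
  | (true, true) => s.horiz = true ∧ p.2 = (s.coord : ℝ) ∧ (s.lo : ℝ) ≤ p.1 ∧ p.1 < (s.hi : ℝ)
  | (true, false) => s.horiz = true ∧ p.2 = (s.coord : ℝ) ∧ (s.lo : ℝ) < p.1 ∧ p.1 ≤ (s.hi : ℝ)
  | (false, true) => s.horiz = false ∧ p.1 = (s.coord : ℝ) ∧ (s.lo : ℝ) ≤ p.2 ∧ p.2 < (s.hi : ℝ)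
  | (false, false) => s.horiz = false ∧ p.1 = (s.coord : ℝ) ∧ (s.lo : ℝ) < p.2 ∧ p.2 ≤ (s.hi : ℝ)

lemma occ_dir {s : GridSeg} {p : ℝ × ℝ} {d : Bool × Bool} (h : Occ s p d) : s.horiz = d.1 := by
  rcases d with ⟨d1, d2⟩; cases d1 <;> cases d2 <;> exact h.1

lemma occ_of_mem {s : GridSeg} {p : ℝ × ℝ} (hp : p ∈ s.pts) : ∃ d, Occ s p d := by
  cases hb : s.horiz
  · rw [pts_vert hb] at hp
    rcases lt_or_eq_of_le hp.2.2 with h | h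
    · exact ⟨(false, true), hb, hp.1, hp.2.1, h⟩
    · exact ⟨(false, false), hb, hp.1, lt_of_lt_of_le (lo_lt_hi s) h.ge, hp.2.2⟩
  · rw [pts_horiz hb] at hp
    rcases lt_or_eq_of_le hp.2.2 with h | h
    · exact ⟨(true, true), hb, hp.1, hp.2.1, h⟩
    · exact ⟨(true, false), hb, hp.1, lt_of_lt_of_le (lo_lt_hi s) h.ge, hp.2.2⟩

lemma occ_two {s : GridSeg} {p : ℝ × ℝ} (hp : p ∈ s.pts) (he : p ∉ s.ends) :
    Occ s p (s.horiz, true) ∧ Occ s p (s.horiz, false) := by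
  cases hb : s.horiz
  · rw [pts_vert hb] at hp
    rw [ends_vert hb] at he
    push_neg at he
    have h1 : p.2 ≠ (s.lo : ℝ) := fun h => he.1 (Prod.ext_iff.mpr ⟨hp.1, h⟩)
    have h2 : p.2 ≠ (s.hi : ℝ) := fun h => he.2 (Prod.ext_iff.mpr ⟨hp.1, h⟩)
    exact ⟨⟨hb, hp.1, hp.2.1, lt_of_le_of_ne hp.2.2 h2⟩,
           ⟨hb, hp.1, lt_of_le_of_ne hp.2.1 (Ne.symm h1), hp.2.2⟩⟩
  · rw [pts_horiz hb] at hp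
    rw [ends_horiz hb] at he
    push_neg at he
    have h1 : p.1 ≠ (s.lo : ℝ) := fun h => he.1 (Prod.ext_iff.mpr ⟨h, hp.1⟩)
    have h2 : p.1 ≠ (s.hi : ℝ) := fun h => he.2 (Prod.ext_iff.mpr ⟨h, hp.1⟩)
    exact ⟨⟨hb, hp.1, hp.2.1, lt_of_le_of_ne hp.2.2 h2⟩,
           ⟨hb, hp.1, lt_of_le_of_ne hp.2.1 (Ne.symm h1), hp.2.2⟩⟩

lemma occ_disjoint {s t : GridSeg} {p : ℝ × ℝ} {d : Bool × Bool}
    (hd : Disjoint s.interior t.interior) (h1 : Occ s p d) (h2 : Occ t p d) : False := by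
  rcases d with ⟨d1, d2⟩
  cases d1 <;> cases d2
  · obtain ⟨hs, hps, hls, hhs⟩ := h1
    obtain ⟨ht, hpt, hlt, hht⟩ := h2
    set x : ℝ := (max (s.lo : ℝ) (t.lo : ℝ) + p.2) / 2 with hx
    have hmx : max (s.lo : ℝ) (t.lo : ℝ) < p.2 := max_lt hls hlt
    have hx1 : max (s.lo : ℝ) (t.lo : ℝ) < x := by rw [hx]; linarith
    have hx2 : x < p.2 := by rw [hx]; linarith
    have m1 : (p.1, x) ∈ s.interior := by
      rw [int_vert hs]
      exact ⟨hps, lt_of_le_of_lt (le_max_left _ _) hx1, lt_of_lt_of_le hx2 hhs⟩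
    have m2 : (p.1, x) ∈ t.interior := by
      rw [int_vert ht]
      exact ⟨hpt, lt_of_le_of_lt (le_max_right _ _) hx1, lt_of_lt_of_le hx2 hht⟩
    exact Set.disjoint_left.mp hd m1 m2
  · obtain ⟨hs, hps, hls, hhs⟩ := h1
    obtain ⟨ht, hpt, hlt, hht⟩ := h2
    set x : ℝ := (p.2 + min (s.hi : ℝ) (t.hi : ℝ)) / 2 with hx
    have hmx : p.2 < min (s.hi : ℝ) (t.hi : ℝ) := lt_min hhs hht
    have hx1 : p.2 < x := by rw [hx]; linarith
    have hx2 : x < min (s.hi : ℝ) (t.hi : ℝ) := by rw [hx]; linarith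
    have m1 : (p.1, x) ∈ s.interior := by
      rw [int_vert hs]
      exact ⟨hps, lt_of_le_of_lt hls hx1, lt_of_lt_of_le hx2 (min_le_left _ _)⟩
    have m2 : (p.1, x) ∈ t.interior := by
      rw [int_vert ht]
      exact ⟨hpt, lt_of_le_of_lt hlt hx1, lt_of_lt_of_le hx2 (min_le_right _ _)⟩
    exact Set.disjoint_left.mp hd m1 m2
  · obtain ⟨hs, hps, hls, hhs⟩ := h1
    obtain ⟨ht, hpt, hlt, hht⟩ := h2
    set x : ℝ := (max (s.lo : ℝ) (t.lo : ℝ) + p.1) / 2 with hx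
    have hmx : max (s.lo : ℝ) (t.lo : ℝ) < p.1 := max_lt hls hlt
    have hx1 : max (s.lo : ℝ) (t.lo : ℝ) < x := by rw [hx]; linarith
    have hx2 : x < p.1 := by rw [hx]; linarith
    have m1 : (x, p.2) ∈ s.interior := by
      rw [int_horiz hs]
      exact ⟨hps, lt_of_le_of_lt (le_max_left _ _) hx1, lt_of_lt_of_le hx2 hhs⟩
    have m2 : (x, p.2) ∈ t.interior := by
      rw [int_horiz ht]
      exact ⟨hpt, lt_of_le_of_lt (le_max_right _ _) hx1, lt_of_lt_of_le hx2 hht⟩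
    exact Set.disjoint_left.mp hd m1 m2
  · obtain ⟨hs, hps, hls, hhs⟩ := h1
    obtain ⟨ht, hpt, hlt, hht⟩ := h2
    set x : ℝ := (p.1 + min (s.hi : ℝ) (t.hi : ℝ)) / 2 with hx
    have hmx : p.1 < min (s.hi : ℝ) (t.hi : ℝ) := lt_min hhs hht
    have hx1 : p.1 < x := by rw [hx]; linarith
    have hx2 : x < min (s.hi : ℝ) (t.hi : ℝ) := by rw [hx]; linarith
    have m1 : (x, p.2) ∈ s.interior := by
      rw [int_horiz hs]
      exact ⟨hps, lt_of_le_of_lt hls hx1, lt_of_lt_of_le hx2 (min_le_left _ _)⟩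
    have m2 : (x, p.2) ∈ t.interior := by
      rw [int_horiz ht]
      exact ⟨hpt, lt_of_le_of_lt hlt hx1, lt_of_lt_of_le hx2 (min_le_right _ _)⟩
    exact Set.disjoint_left.mp hd m1 m2

lemma dir5 (a b c d e : Bool × Bool) (hab : a ≠ b) (hac : a ≠ c) (had : a ≠ d) (hae : a ≠ e)
    (hbc : b ≠ c) (hbd : b ≠ d) (hbe : b ≠ e) (hcd : c ≠ d) (hce : c ≠ e) (hde : d ≠ e) :
    False := by
  have h : ({a, b, c, d, e} : Finset (Bool × Bool)).card = 5 := by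
    rw [Finset.card_insert_of_notMem (by simp [hab, hac, had, hae]),
        Finset.card_insert_of_notMem (by simp [hbc, hbd, hbe]),
        Finset.card_insert_of_notMem (by simp [hcd, hce]),
        Finset.card_insert_of_notMem (by simp [hde]),
        Finset.card_singleton]
  have h2 := Finset.card_le_univ ({a, b, c, d, e} : Finset (Bool × Bool))
  rw [h] at h2
  simp at h2

lemma inter_unique {s t : GridSeg} {p q : ℝ × ℝ} (hd : Disjoint s.interior t.interior)
    (hps : p ∈ s.pts) (hpt : p ∈ t.pts) (hqs : q ∈ s.pts) (hqt : q ∈ t.pts) : p = q := by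
  by_contra hne
  cases hs : s.horiz <;> cases ht : t.horiz
  · -- both vertical
    rw [pts_vert hs] at hps hqs
    rw [pts_vert ht] at hpt hqt
    have h1 : p.1 = q.1 := hps.1.trans hqs.1.symm
    have h2 : p.2 ≠ q.2 := fun h => hne (Prod.ext_iff.mpr ⟨h1, h⟩)
    set m : ℝ := (p.2 + q.2) / 2 with hm
    have hmlo_s : (s.lo : ℝ) < m := by
      rcases h2.lt_or_gt with h | h
      · rw [hm]; have := hps.2.1; linarith
      · rw [hm]; have := hqs.2.1; linarith
    have hmhi_s : m < (s.hi : ℝ) := by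
      rcases h2.lt_or_gt with h | h
      · rw [hm]; have := hqs.2.2; linarith
      · rw [hm]; have := hps.2.2; linarith
    have hmlo_t : (t.lo : ℝ) < m := by
      rcases h2.lt_or_gt with h | h
      · rw [hm]; have := hpt.2.1; linarith
      · rw [hm]; have := hqt.2.1; linarith
    have hmhi_t : m < (t.hi : ℝ) := by
      rcases h2.lt_or_gt with h | h
      · rw [hm]; have := hqt.2.2; linarith
      · rw [hm]; have := hpt.2.2; linarith
    have m1 : (p.1, m) ∈ s.interior := by rw [int_vert hs]; exact ⟨hps.1, hmlo_s, hmhi_s⟩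
    have m2 : (p.1, m) ∈ t.interior := by rw [int_vert ht]; exact ⟨hpt.1, hmlo_t, hmhi_t⟩
    exact Set.disjoint_left.mp hd m1 m2
  · -- s vertical, t horizontal
    rw [pts_vert hs] at hps hqs
    rw [pts_horiz ht] at hpt hqt
    exact hne (Prod.ext_iff.mpr ⟨hps.1.trans hqs.1.symm, hpt.1.trans hqt.1.symm⟩)
  · -- s horizontal, t vertical
    rw [pts_horiz hs] at hps hqs
    rw [pts_vert ht] at hpt hqt
    exact hne (Prod.ext_iff.mpr ⟨hpt.1.trans hqt.1.symm, hps.1.trans hqs.1.symm⟩)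
  · -- both horizontal
    rw [pts_horiz hs] at hps hqs
    rw [pts_horiz ht] at hpt hqt
    have h1 : p.2 = q.2 := hps.1.trans hqs.1.symm
    have h2 : p.1 ≠ q.1 := fun h => hne (Prod.ext_iff.mpr ⟨h, h1⟩)
    set m : ℝ := (p.1 + q.1) / 2 with hm
    have hmlo_s : (s.lo : ℝ) < m := by
      rcases h2.lt_or_gt with h | h
      · rw [hm]; have := hps.2.1; linarith
      · rw [hm]; have := hqs.2.1; linarith
    have hmhi_s : m < (s.hi : ℝ) := by
      rcases h2.lt_or_gt with h | h
      · rw [hm]; have := hqs.2.2; linarith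
      · rw [hm]; have := hps.2.2; linarith
    have hmlo_t : (t.lo : ℝ) < m := by
      rcases h2.lt_or_gt with h | h
      · rw [hm]; have := hpt.2.1; linarith
      · rw [hm]; have := hqt.2.1; linarith
    have hmhi_t : m < (t.hi : ℝ) := by
      rcases h2.lt_or_gt with h | h
      · rw [hm]; have := hqt.2.2; linarith
      · rw [hm]; have := hpt.2.2; linarith
    have m1 : (m, p.2) ∈ s.interior := by rw [int_horiz hs]; exact ⟨hps.1, hmlo_s, hmhi_s⟩
    have m2 : (m, p.2) ∈ t.interior := by rw [int_horiz ht]; exact ⟨hpt.1, hmlo_t, hmhi_t⟩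
    exact Set.disjoint_left.mp hd m1 m2

lemma median (a b c : ℝ) (hab : a ≠ b) (hac : a ≠ c) (hbc : b ≠ c)
    (h1 : ∀ x : ℝ, min a b < x → x < max a b → min a c < x → x < max a c → False)
    (h2 : ∀ x : ℝ, min a b < x → x < max a b → min b c < x → x < max b c → False)
    (h3 : ∀ x : ℝ, min a c < x → x < max a c → min b c < x → x < max b c → False) : False := by
  rcases lt_trichotomy a b with h | h | h
  · rcases lt_trichotomy b c with h' | h' | h'
    · -- a < b < c
      exact h1 ((a + b) / 2)
        (by rw [min_eq_left h.le]; linarith)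
        (by rw [max_eq_right h.le]; linarith)
        (by rw [min_eq_left (by linarith : a ≤ c)]; linarith)
        (by rw [max_eq_right (by linarith : a ≤ c)]; linarith)
    · exact hbc h'
    · rcases lt_trichotomy a c with h'' | h'' | h''
      · -- a < c < b
        exact h1 ((a + c) / 2)
          (by rw [min_eq_left h.le]; linarith)
          (by rw [max_eq_right h.le]; linarith)
          (by rw [min_eq_left h''.le]; linarith)
          (by rw [max_eq_right h''.le]; linarith)
      · exact hac h''
      · -- c < a < b
        exact h2 ((a + b) / 2)
          (by rw [min_eq_left h.le]; linarith)
          (by rw [max_eq_right h.le]; linarith)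
          (by rw [min_eq_right (by linarith : c ≤ b)]; linarith)
          (by rw [max_eq_left (by linarith : c ≤ b)]; linarith)
  · exact hab h
  · rcases lt_trichotomy a c with h' | h' | h'
    · -- b < a < c
      exact h3 ((a + c) / 2)
        (by rw [min_eq_left h'.le]; linarith)
        (by rw [max_eq_right h'.le]; linarith)
        (by rw [min_eq_left (by linarith : b ≤ c)]; linarith)
        (by rw [max_eq_right (by linarith : b ≤ c)]; linarith)
    · exact hac h'
    · rcases lt_trichotomy b c with h'' | h'' | h''
      · -- b < c < a
        exact h2 ((b + c) / 2)
          (by rw [min_eq_right h.le]; linarith)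
          (by rw [max_eq_left h.le]; linarith)
          (by rw [min_eq_left h''.le]; linarith)
          (by rw [max_eq_right h''.le]; linarith)
      · exact hbc h''
      · -- c < b < a
        exact h1 ((a + b) / 2)
          (by rw [min_eq_right h.le]; linarith)
          (by rw [max_eq_left h.le]; linarith)
          (by rw [min_eq_right h'.le]; linarith)
          (by rw [max_eq_left h'.le]; linarith)

lemma triangle_common {s t u : GridSeg}
    (dst : Disjoint s.interior t.interior) (dsu : Disjoint s.interior u.interior)
    (dtu : Disjoint t.interior u.interior)
    (hst : s.Touch t) (hsu : s.Touch u) (htu : t.Touch u) :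
    ∃ q, q ∈ s.pts ∧ q ∈ t.pts ∧ q ∈ u.pts := by
  obtain ⟨q1, q1s, q1t, -⟩ := hst
  obtain ⟨q2, q2s, q2u, -⟩ := hsu
  obtain ⟨q3, q3t, q3u, -⟩ := htu
  by_cases h12 : q1 = q2
  · exact ⟨q1, q1s, q1t, h12 ▸ q2u⟩
  by_cases h13 : q1 = q3
  · exact ⟨q1, q1s, q1t, h13 ▸ q3u⟩
  by_cases h23 : q2 = q3
  · exact ⟨q2, q2s, h23 ▸ q3t, q2u⟩
  exfalso
  cases hs : s.horiz <;> cases ht : t.horiz <;> cases hu : u.horiz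
  · -- all vertical
    rw [pts_vert hs] at q1s q2s
    rw [pts_vert ht] at q1t q3t
    rw [pts_vert hu] at q2u q3u
    have e2 : q2.1 = q1.1 := q2s.1.trans q1s.1.symm
    have e3 : q3.1 = q1.1 := q3t.1.trans q1t.1.symm
    have d12 : q1.2 ≠ q2.2 := fun h => h12 (Prod.ext_iff.mpr ⟨e2.symm, h⟩)
    have d13 : q1.2 ≠ q3.2 := fun h => h13 (Prod.ext_iff.mpr ⟨e3.symm, h⟩)
    have d23 : q2.2 ≠ q3.2 := fun h => h23 (Prod.ext_iff.mpr ⟨e2.trans e3.symm, h⟩)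
    apply median q1.2 q2.2 q3.2 d12 d13 d23
    · intro x x1 x2 x3 x4
      have m1 : (q1.1, x) ∈ s.interior := by
        rw [int_vert hs]
        refine ⟨q1s.1, ?_, ?_⟩
        · exact lt_of_le_of_lt (le_min q1s.2.1 q2s.2.1) x1
        · exact lt_of_lt_of_le x2 (max_le q1s.2.2 q2s.2.2)
      have m2 : (q1.1, x) ∈ t.interior := by
        rw [int_vert ht]
        refine ⟨q1t.1, ?_, ?_⟩
        · exact lt_of_le_of_lt (le_min q1t.2.1 q3t.2.1) x3
        · exact lt_of_lt_of_le x4 (max_le q1t.2.2 q3t.2.2)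
      exact Set.disjoint_left.mp dst m1 m2
    · intro x x1 x2 x3 x4
      have m1 : (q1.1, x) ∈ s.interior := by
        rw [int_vert hs]
        refine ⟨q1s.1, ?_, ?_⟩
        · exact lt_of_le_of_lt (le_min q1s.2.1 q2s.2.1) x1
        · exact lt_of_lt_of_le x2 (max_le q1s.2.2 q2s.2.2)
      have m2 : (q1.1, x) ∈ u.interior := by
        rw [int_vert hu]
        refine ⟨e2 ▸ q2u.1, ?_, ?_⟩
        · exact lt_of_le_of_lt (le_min q2u.2.1 q3u.2.1) x3
        · exact lt_of_lt_of_le x4 (max_le q2u.2.2 q3u.2.2)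
      exact Set.disjoint_left.mp dsu m1 m2
    · intro x x1 x2 x3 x4
      have m1 : (q1.1, x) ∈ t.interior := by
        rw [int_vert ht]
        refine ⟨q1t.1, ?_, ?_⟩
        · exact lt_of_le_of_lt (le_min q1t.2.1 q3t.2.1) x1
        · exact lt_of_lt_of_le x2 (max_le q1t.2.2 q3t.2.2)
      have m2 : (q1.1, x) ∈ u.interior := by
        rw [int_vert hu]
        refine ⟨e2 ▸ q2u.1, ?_, ?_⟩
        · exact lt_of_le_of_lt (le_min q2u.2.1 q3u.2.1) x3
        · exact lt_of_lt_of_le x4 (max_le q2u.2.2 q3u.2.2)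
      exact Set.disjoint_left.mp dtu m1 m2
  · -- s,t vertical, u horizontal
    rw [pts_vert hs] at q1s q2s
    rw [pts_vert ht] at q1t q3t
    rw [pts_horiz hu] at q2u q3u
    have e1 : q2.1 = q3.1 := (q2s.1.trans q1s.1.symm).trans (q1t.1.trans q3t.1.symm)
    exact h23 (Prod.ext_iff.mpr ⟨e1, q2u.1.trans q3u.1.symm⟩)
  · -- s vertical, t horizontal, u vertical
    rw [pts_vert hs] at q1s q2s
    rw [pts_horiz ht] at q1t q3t
    rw [pts_vert hu] at q2u q3u
    have e1 : q2.1 = q3.1 := q2u.1.trans q3u.1.symm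
    have e2 : q1.1 = q2.1 := q1s.1.trans q2s.1.symm
    exact h13 (Prod.ext_iff.mpr ⟨e2.trans e1, q1t.1.trans q3t.1.symm⟩)
  · -- s vertical, t,u horizontal
    rw [pts_vert hs] at q1s q2s
    rw [pts_horiz ht] at q1t q3t
    rw [pts_horiz hu] at q2u q3u
    have e1 : q1.2 = q2.2 := (q1t.1.trans q3t.1.symm).trans (q3u.1.trans q2u.1.symm)
    exact h12 (Prod.ext_iff.mpr ⟨q1s.1.trans q2s.1.symm, e1⟩)
  · -- s horizontal, t,u vertical
    rw [pts_horiz hs] at q1s q2s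
    rw [pts_vert ht] at q1t q3t
    rw [pts_vert hu] at q2u q3u
    have e1 : q1.1 = q2.1 := (q1t.1.trans q3t.1.symm).trans (q3u.1.trans q2u.1.symm)
    exact h12 (Prod.ext_iff.mpr ⟨e1, q1s.1.trans q2s.1.symm⟩)
  · -- s horizontal, t vertical, u horizontal
    rw [pts_horiz hs] at q1s q2s
    rw [pts_vert ht] at q1t q3t
    rw [pts_horiz hu] at q2u q3u
    have e1 : q1.2 = q2.2 := q1s.1.trans q2s.1.symm
    have e2 : q2.2 = q3.2 := q2u.1.trans q3u.1.symm
    exact h13 (Prod.ext_iff.mpr ⟨q1t.1.trans q3t.1.symm, e1.trans e2⟩)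
  · -- s,t horizontal, u vertical
    rw [pts_horiz hs] at q1s q2s
    rw [pts_horiz ht] at q1t q3t
    rw [pts_vert hu] at q2u q3u
    have e1 : q2.2 = q3.2 := (q2s.1.trans q1s.1.symm).trans (q1t.1.trans q3t.1.symm)
    exact h23 (Prod.ext_iff.mpr ⟨q2u.1.trans q3u.1.symm, e1⟩)
  · -- all horizontal
    rw [pts_horiz hs] at q1s q2s
    rw [pts_horiz ht] at q1t q3t
    rw [pts_horiz hu] at q2u q3u
    have e2 : q2.2 = q1.2 := q2s.1.trans q1s.1.symm
    have e3 : q3.2 = q1.2 := q3t.1.trans q1t.1.symm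
    have d12 : q1.1 ≠ q2.1 := fun h => h12 (Prod.ext_iff.mpr ⟨h, e2.symm⟩)
    have d13 : q1.1 ≠ q3.1 := fun h => h13 (Prod.ext_iff.mpr ⟨h, e3.symm⟩)
    have d23 : q2.1 ≠ q3.1 := fun h => h23 (Prod.ext_iff.mpr ⟨h, e2.trans e3.symm⟩)
    apply median q1.1 q2.1 q3.1 d12 d13 d23
    · intro x x1 x2 x3 x4
      have m1 : (x, q1.2) ∈ s.interior := by
        rw [int_horiz hs]
        refine ⟨q1s.1, ?_, ?_⟩
        · exact lt_of_le_of_lt (le_min q1s.2.1 q2s.2.1) x1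
        · exact lt_of_lt_of_le x2 (max_le q1s.2.2 q2s.2.2)
      have m2 : (x, q1.2) ∈ t.interior := by
        rw [int_horiz ht]
        refine ⟨q1t.1, ?_, ?_⟩
        · exact lt_of_le_of_lt (le_min q1t.2.1 q3t.2.1) x3
        · exact lt_of_lt_of_le x4 (max_le q1t.2.2 q3t.2.2)
      exact Set.disjoint_left.mp dst m1 m2
    · intro x x1 x2 x3 x4
      have m1 : (x, q1.2) ∈ s.interior := by
        rw [int_horiz hs]
        refine ⟨q1s.1, ?_, ?_⟩
        · exact lt_of_le_of_lt (le_min q1s.2.1 q2s.2.1) x1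
        · exact lt_of_lt_of_le x2 (max_le q1s.2.2 q2s.2.2)
      have m2 : (x, q1.2) ∈ u.interior := by
        rw [int_horiz hu]
        refine ⟨e2 ▸ q2u.1, ?_, ?_⟩
        · exact lt_of_le_of_lt (le_min q2u.2.1 q3u.2.1) x3
        · exact lt_of_lt_of_le x4 (max_le q2u.2.2 q3u.2.2)
      exact Set.disjoint_left.mp dsu m1 m2
    · intro x x1 x2 x3 x4
      have m1 : (x, q1.2) ∈ t.interior := by
        rw [int_horiz ht]
        refine ⟨q1t.1, ?_, ?_⟩
        · exact lt_of_le_of_lt (le_min q1t.2.1 q3t.2.1) x1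
        · exact lt_of_lt_of_le x2 (max_le q1t.2.2 q3t.2.2)
      have m2 : (x, q1.2) ∈ u.interior := by
        rw [int_horiz hu]
        refine ⟨e2 ▸ q2u.1, ?_, ?_⟩
        · exact lt_of_le_of_lt (le_min q2u.2.1 q3u.2.1) x3
        · exact lt_of_lt_of_le x4 (max_le q2u.2.2 q3u.2.2)
      exact Set.disjoint_left.mp dtu m1 m2

lemma k4_cross {s t u w : GridSeg}
    (dst : Disjoint s.interior t.interior) (dsu : Disjoint s.interior u.interior)
    (dsw : Disjoint s.interior w.interior) (dtu : Disjoint t.interior u.interior)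
    (dtw : Disjoint t.interior w.interior) (duw : Disjoint u.interior w.interior)
    (hst : s.Touch t) (hsu : s.Touch u) (hsw : s.Touch w)
    (htu : t.Touch u) (htw : t.Touch w) (huw : u.Touch w) :
    ∃ q, q ∈ s.ends ∧ q ∈ s.pts ∧
      ∀ z : GridSeg, Disjoint s.interior z.interior → Disjoint t.interior z.interior →
        Disjoint u.interior z.interior → Disjoint w.interior z.interior → q ∉ z.pts := by
  obtain ⟨q, qs, qt, qu⟩ := triangle_common dst dsu dtu hst hsu htu
  obtain ⟨q', qs', qt', qw'⟩ := triangle_common dst dsw dtw hst hsw htw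
  have hqq : q' = q := inter_unique dst qs' qt' qs qt
  rw [hqq] at qw'
  obtain ⟨dt, odt⟩ := occ_of_mem qt
  obtain ⟨du, odu⟩ := occ_of_mem qu
  obtain ⟨dw, odw⟩ := occ_of_mem qw'
  have hdtu : dt ≠ du := fun e => occ_disjoint dtu odt (by rw [← e] at odu; exact odu)
  have hdtw : dt ≠ dw := fun e => occ_disjoint dtw odt (by rw [← e] at odw; exact odw)
  have hduw : du ≠ dw := fun e => occ_disjoint duw odu (by rw [← e] at odw; exact odw)
  have hse : q ∈ s.ends := by
    by_contra h
    obtain ⟨o1, o2⟩ := occ_two qs h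
    exact dir5 (s.horiz, true) (s.horiz, false) dt du dw
      (by simp)
      (fun e => occ_disjoint dst o1 (by rw [← e] at odt; exact odt))
      (fun e => occ_disjoint dsu o1 (by rw [← e] at odu; exact odu))
      (fun e => occ_disjoint dsw o1 (by rw [← e] at odw; exact odw))
      (fun e => occ_disjoint dst o2 (by rw [← e] at odt; exact odt))
      (fun e => occ_disjoint dsu o2 (by rw [← e] at odu; exact odu))
      (fun e => occ_disjoint dsw o2 (by rw [← e] at odw; exact odw))
      hdtu hdtw hduw
  refine ⟨q, hse, qs, ?_⟩
  intro z hzs hzt hzu hzw hq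
  obtain ⟨ds, ods⟩ := occ_of_mem qs
  obtain ⟨dz, odz⟩ := occ_of_mem hq
  have hdst : ds ≠ dt := fun e => occ_disjoint dst ods (by rw [← e] at odt; exact odt)
  have hdsu : ds ≠ du := fun e => occ_disjoint dsu ods (by rw [← e] at odu; exact odu)
  have hdsw : ds ≠ dw := fun e => occ_disjoint dsw ods (by rw [← e] at odw; exact odw)
  have hdsz : ds ≠ dz := fun e => occ_disjoint hzs ods (by rw [← e] at odz; exact odz)
  have hdtz : dt ≠ dz := fun e => occ_disjoint hzt odt (by rw [← e] at odz; exact odz)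
  have hduz : du ≠ dz := fun e => occ_disjoint hzu odu (by rw [← e] at odz; exact odz)
  have hdwz : dw ≠ dz := fun e => occ_disjoint hzw odw (by rw [← e] at odz; exact odz)
  exact dir5 ds dt du dw dz hdst hdsu hdsw hdsz hdtu hdtw hdtz hduw hduz hdwz

end F3Aux


open F3Aux GridSeg
open Fin.CommRing

/-- family `F₃`: an odd cycle `v_1 … v_k` (`k ≥ 5`) where every cycle
vertex carries one triangle complete to it (Type 1), triangles pairwise anticomplete,
is not contact B₀-VPG. -/
theorem F3_not_contactB0VPG (k : ℕ) (hk : 5 ≤ k) (hodd : Odd k) :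
    ¬ ContactB0VPG (cycleWithTriangles k (fun _ => 1)) := by
  classical
  haveI : NeZero k := ⟨by omega⟩
  rintro ⟨F, hdisj, hadj⟩
  set G := cycleWithTriangles k (fun _ => 1) with hG
  set S : Fin k → GridSeg := fun i => F (Sum.inl i) with hS
  -- basic Fin k facts
  have hvone : (1 : Fin k).val = 1 := by
    rw [Fin.val_one']
    exact Nat.mod_eq_of_lt (by omega)
  have hshift : ∀ i : Fin k, cycShift i 1 = i + 1 := by
    intro i
    unfold cycShift
    congr 1
  have nec : ∀ c : ℕ, 0 < c → c < k → ∀ i : Fin k, i + (c : Fin k) ≠ i := by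
    intro c hc1 hc2 i h
    have h0 : (c : Fin k) = 0 := by
      have := add_left_cancel (a := i) (b := (c : Fin k)) (c := 0) (by rw [add_zero]; exact h)
      exact this
    have h1 : c % k = 0 := by
      have := congrArg Fin.val h0
      rwa [Fin.val_natCast] at this
    rw [Nat.mod_eq_of_lt hc2] at h1
    omega
  have cast2 : ∀ i : Fin k, i + 1 + 1 = i + ((2 : ℕ) : Fin k) := by
    intro i; push_cast; ring
  have cast3 : ∀ i : Fin k, i + 1 + 1 + 1 = i + ((3 : ℕ) : Fin k) := by
    intro i; push_cast; ring
  have ne1 : ∀ i : Fin k, i + 1 ≠ i := by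
    intro i
    have := nec 1 (by omega) (by omega) i
    rwa [Nat.cast_one] at this
  have ne2 : ∀ i : Fin k, i + 1 + 1 ≠ i := by
    intro i; rw [cast2]; exact nec 2 (by omega) (by omega) i
  have ne3 : ∀ i : Fin k, i + 1 + 1 + 1 ≠ i := by
    intro i; rw [cast3]; exact nec 3 (by omega) (by omega) i
  have vne : ∀ i j : Fin k, i ≠ j →
      (Sum.inl i : Fin k ⊕ Σ i : Fin k, Fin 1 × Fin 3) ≠ Sum.inl j :=
    fun i j h e => h (Sum.inl_injective e)
  -- adjacency facts
  have adj_cyc : ∀ i : Fin k, G.Adj (Sum.inl i) (Sum.inl (i + 1)) := by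
    intro i
    show i ≠ i + 1 ∧ (i = cycShift (i + 1) 1 ∨ i + 1 = cycShift i 1)
    exact ⟨Ne.symm (ne1 i), Or.inr (hshift i).symm⟩
  have nadj_two : ∀ i : Fin k, ¬ G.Adj (Sum.inl i) (Sum.inl (i + 1 + 1)) := by
    intro i h
    have h' : i ≠ i + 1 + 1 ∧ (i = cycShift (i + 1 + 1) 1 ∨ i + 1 + 1 = cycShift i 1) := h
    rcases h'.2 with h2 | h2
    · rw [hshift] at h2; exact ne3 i h2.symm
    · rw [hshift] at h2; exact ne1 (i + 1) h2
  have adj_it : ∀ (i : Fin k) (a : Fin 3), G.Adj (Sum.inl i) (Sum.inr ⟨i, 0, a⟩) :=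
    fun i a => rfl
  have adj_tt : ∀ (i : Fin k) (a b : Fin 3), a ≠ b →
      G.Adj (Sum.inr ⟨i, 0, a⟩) (Sum.inr ⟨i, 0, b⟩) :=
    fun i a b h => ⟨rfl, rfl, h⟩
  have vne_it : ∀ (i : Fin k) (x : Σ i : Fin k, Fin 1 × Fin 3),
      (Sum.inl i : Fin k ⊕ Σ i : Fin k, Fin 1 × Fin 3) ≠ Sum.inr x := by
    intro i x h; cases h
  have vne_tt : ∀ (i : Fin k) (a b : Fin 3), a ≠ b →
      (Sum.inr ⟨i, 0, a⟩ : Fin k ⊕ Σ i : Fin k, Fin 1 × Fin 3) ≠ Sum.inr ⟨i, 0, b⟩ := by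
    intro i a b h e
    apply h
    have := Sum.inr_injective e
    simpa using this
  -- STEP 1 : the cross at each cycle vertex
  have KEY : ∀ i : Fin k, ∃ q, q ∈ (S i).ends ∧ q ∈ (S i).pts ∧
      ∀ j : Fin k, j ≠ i → q ∉ (S j).pts := by
    intro i
    have d01 := hdisj (Sum.inl i) (Sum.inr ⟨i, 0, 0⟩) (vne_it i _)
    have d02 := hdisj (Sum.inl i) (Sum.inr ⟨i, 0, 1⟩) (vne_it i _)
    have d03 := hdisj (Sum.inl i) (Sum.inr ⟨i, 0, 2⟩) (vne_it i _)
    have d12 := hdisj (Sum.inr ⟨i, 0, 0⟩) (Sum.inr ⟨i, 0, 1⟩) (vne_tt i 0 1 (by decide))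
    have d13 := hdisj (Sum.inr ⟨i, 0, 0⟩) (Sum.inr ⟨i, 0, 2⟩) (vne_tt i 0 2 (by decide))
    have d23 := hdisj (Sum.inr ⟨i, 0, 1⟩) (Sum.inr ⟨i, 0, 2⟩) (vne_tt i 1 2 (by decide))
    have t01 := (hadj _ _ (vne_it i _)).mp (adj_it i 0)
    have t02 := (hadj _ _ (vne_it i _)).mp (adj_it i 1)
    have t03 := (hadj _ _ (vne_it i _)).mp (adj_it i 2)
    have t12 := (hadj _ _ (vne_tt i 0 1 (by decide))).mp (adj_tt i 0 1 (by decide))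
    have t13 := (hadj _ _ (vne_tt i 0 2 (by decide))).mp (adj_tt i 0 2 (by decide))
    have t23 := (hadj _ _ (vne_tt i 1 2 (by decide))).mp (adj_tt i 1 2 (by decide))
    obtain ⟨q, hqe, hqp, hz⟩ := k4_cross d01 d02 d03 d12 d13 d23 t01 t02 t03 t12 t13 t23
    refine ⟨q, hqe, hqp, ?_⟩
    intro j hj
    exact hz (S j) (hdisj _ _ (vne i j (Ne.symm hj))) (hdisj _ _ (vne_it j _).symm)
      (hdisj _ _ (vne_it j _).symm) (hdisj _ _ (vne_it j _).symm)
  choose p hpe hpp hpz using KEY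
  -- STEP 2 : the contact points of the cycle edges
  have EDGE : ∀ i : Fin k, ∃ q, q ∈ (S i).pts ∧ q ∈ (S (i + 1)).pts ∧
      (q ∈ (S i).ends ∨ q ∈ (S (i + 1)).ends) :=
    fun i => (hadj _ _ (vne _ _ (Ne.symm (ne1 i)))).mp (adj_cyc i)
  choose c hc1 hc2 hc3 using EDGE
  have hcp1 : ∀ i, c i ≠ p i :=
    fun i h => hpz i (i + 1) (ne1 i) (by rw [← h]; exact hc2 i)
  have hcp2 : ∀ i, c i ≠ p (i + 1) :=
    fun i h => hpz (i + 1) i (Ne.symm (ne1 i)) (by rw [← h]; exact hc1 i)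
  -- the assignment of free endpoints to edges
  set g : Fin k → Fin k := fun i => if c i ∈ (S i).ends then i else i + 1 with hgdef
  have hg : ∀ i, (g i = i ∧ c i ∈ (S i).ends) ∨ (g i = i + 1 ∧ c i ∈ (S (i + 1)).ends) := by
    intro i
    by_cases h : c i ∈ (S i).ends
    · left; exact ⟨by rw [hgdef]; simp [h], h⟩
    · right; exact ⟨by rw [hgdef]; simp [h], (hc3 i).resolve_left h⟩
  -- no endpoint of S (i+1) serves both edges i and i+1
  have L : ∀ i : Fin k, c i ∈ (S (i + 1)).ends → c (i + 1) ∈ (S (i + 1)).ends → False := by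
    intro i h1 h2
    have heq : c (i + 1) = c i := by
      rcases ends_two (hpe (i + 1)) h1 h2 (Ne.symm (hcp2 i)) with h | h
      · exact absurd h (hcp1 (i + 1))
      · exact h
    have hz1 : c i ∈ (S i).pts := hc1 i
    have hz2 : c i ∈ (S (i + 1 + 1)).pts := by rw [← heq]; exact hc2 (i + 1)
    by_cases hcase : c i ∈ (S i).ends ∨ c i ∈ (S (i + 1 + 1)).ends
    · exact nadj_two i ((hadj _ _ (vne _ _ (Ne.symm (ne2 i)))).mpr ⟨c i, hz1, hz2, hcase⟩)
    · push_neg at hcase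
      obtain ⟨o1, o2⟩ := occ_two hz1 hcase.1
      obtain ⟨o3, o4⟩ := occ_two hz2 hcase.2
      obtain ⟨d, o5⟩ := occ_of_mem (ends_pts h1)
      have d02 : Disjoint (S i).interior (S (i + 1 + 1)).interior :=
        hdisj _ _ (vne _ _ (Ne.symm (ne2 i)))
      have d01 : Disjoint (S i).interior (S (i + 1)).interior :=
        hdisj _ _ (vne _ _ (Ne.symm (ne1 i)))
      have d21 : Disjoint (S (i + 1 + 1)).interior (S (i + 1)).interior :=
        hdisj _ _ (vne _ _ (ne1 (i + 1)))
      exact dir5 ((S i).horiz, true) ((S i).horiz, false)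
        ((S (i + 1 + 1)).horiz, true) ((S (i + 1 + 1)).horiz, false) d
        (by simp)
        (fun e => occ_disjoint d02 o1 (by rw [← e] at o3; exact o3))
        (fun e => occ_disjoint d02 o1 (by rw [← e] at o4; exact o4))
        (fun e => occ_disjoint d01 o1 (by rw [← e] at o5; exact o5))
        (fun e => occ_disjoint d02 o2 (by rw [← e] at o3; exact o3))
        (fun e => occ_disjoint d02 o2 (by rw [← e] at o4; exact o4))
        (fun e => occ_disjoint d01 o2 (by rw [← e] at o5; exact o5))
        (by simp)
        (fun e => occ_disjoint d21 o3 (by rw [← e] at o5; exact o5))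
        (fun e => occ_disjoint d21 o4 (by rw [← e] at o5; exact o5))
  -- g is injective, hence surjective
  have ginj : Function.Injective g := by
    intro i j hgij
    by_contra hij
    rcases hg i with ⟨hi, hie⟩ | ⟨hi, hie⟩ <;> rcases hg j with ⟨hj, hje⟩ | ⟨hj, hje⟩
    · exact hij (hi.symm.trans (hgij.trans hj))
    · have hij1 : i = j + 1 := hi.symm.trans (hgij.trans hj)
      exact L j hje (hij1 ▸ hie)
    · have hji1 : j = i + 1 := hj.symm.trans (hgij.symm.trans hi)
      exact L i hie (hji1 ▸ hje)
    · exact hij (add_right_cancel (hi.symm.trans (hgij.trans hj)))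
  have gsurj : Function.Surjective g := Finite.injective_iff_surjective.mp ginj
  -- consecutive segments are perpendicular
  have perp : ∀ i : Fin k, (S i).horiz ≠ (S (i + 1)).horiz := by
    intro i hEq
    have dii1 : Disjoint (S i).interior (S (i + 1)).interior :=
      hdisj _ _ (vne _ _ (Ne.symm (ne1 i)))
    have e1 : c i ∈ (S i).ends := by
      by_contra h
      obtain ⟨o1, o2⟩ := occ_two (hc1 i) h
      obtain ⟨d, od⟩ := occ_of_mem (hc2 i)
      have hd : d.1 = (S i).horiz := (occ_dir od).symm.trans hEq.symm
      rcases d with ⟨d1, d2⟩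
      cases d2
      · rw [show d1 = (S i).horiz from hd] at od
        exact occ_disjoint dii1 o2 od
      · rw [show d1 = (S i).horiz from hd] at od
        exact occ_disjoint dii1 o1 od
    have e2 : c i ∈ (S (i + 1)).ends := by
      by_contra h
      obtain ⟨o1, o2⟩ := occ_two (hc2 i) h
      obtain ⟨d, od⟩ := occ_of_mem (hc1 i)
      have hd : d.1 = (S (i + 1)).horiz := (occ_dir od).symm.trans hEq
      rcases d with ⟨d1, d2⟩
      cases d2
      · rw [show d1 = (S (i + 1)).horiz from hd] at od
        exact occ_disjoint dii1.symm o2 od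
      · rw [show d1 = (S (i + 1)).horiz from hd] at od
        exact occ_disjoint dii1.symm o1 od
    have hgi1 : g (i + 1) = i + 1 + 1 := by
      rcases hg (i + 1) with ⟨h, he⟩ | ⟨h, _⟩
      · exact (L i e2 he).elim
      · exact h
    have hm1 : (i - 1) + 1 = i := by ring
    have hgm : g (i - 1) = i - 1 := by
      rcases hg (i - 1) with ⟨h, _⟩ | ⟨h, he⟩
      · exact h
      · exact (L (i - 1) he (by rw [hm1]; exact e1)).elim
    rcases hg i with ⟨h, _⟩ | ⟨h, _⟩
    · obtain ⟨j, hj⟩ := gsurj (i + 1)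
      rcases hg j with ⟨h', _⟩ | ⟨h', _⟩
      · have hji : j = i + 1 := h'.symm.trans hj
        rw [hji] at h'
        rw [hgi1] at h'
        exact ne1 (i + 1) h'
      · have hji : j = i := add_right_cancel (h'.symm.trans hj)
        rw [hji] at h'
        rw [h] at h'
        exact ne1 i h'.symm
    · obtain ⟨j, hj⟩ := gsurj i
      rcases hg j with ⟨h', _⟩ | ⟨h', _⟩
      · have hji : j = i := h'.symm.trans hj
        rw [hji, h] at h'
        exact ne1 i h'
      · have hj1 : j + 1 = i := h'.symm.trans hj
        have hjm : j = i - 1 := by rw [← hj1]; ring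
        rw [hjm, hgm] at hj
        rw [hj] at hm1
        exact ne1 i hm1
  -- parity contradiction around the odd cycle
  have bne : ∀ x y : Bool, x ≠ y → y = !x := by decide
  have flip : ∀ n : ℕ, (S (((n + 1 : ℕ)) : Fin k)).horiz = ! (S ((n : ℕ) : Fin k)).horiz := by
    intro n
    have e : (((n + 1 : ℕ)) : Fin k) = ((n : ℕ) : Fin k) + 1 := by push_cast; ring
    rw [e]
    exact bne _ _ (perp ((n : ℕ) : Fin k))
  have evens : ∀ n : ℕ, (S ((2 * n : ℕ) : Fin k)).horiz = (S ((0 : ℕ) : Fin k)).horiz := by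
    intro n
    induction n with
    | zero => norm_num
    | succ m ih =>
      have e : 2 * (m + 1) = (2 * m + 1) + 1 := by ring
      rw [e, flip, flip, ih, Bool.not_not]
  obtain ⟨m, hm⟩ := hodd
  have h1 : (S (((2 * m + 1 : ℕ)) : Fin k)).horiz = ! (S ((0 : ℕ) : Fin k)).horiz := by
    rw [flip (2 * m), evens m]
  have h2 : (((2 * m + 1 : ℕ)) : Fin k) = ((0 : ℕ) : Fin k) := by
    rw [← hm, Nat.cast_zero]
    exact Fin.natCast_self k
  rw [h2] at h1
  simp at h1
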